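/- Let K be a field containing a subfield F, and L/K a finite separable field extension. Then every higher F-derivation {d_j} on K extends uniquely to a higher F-derivation on L. -/

import Mathlib

open PowerSeries

lemma psMemSpanPow {L : Type*} [CommRing L] (n : ℕ) (x : PowerSeries L) :
    x ∈ (Ideal.span {X} : Ideal (PowerSeries L)) ^ n ↔ ∀ i < n, coeff i x = 0 := by
  rw [Ideal.span_singleton_pow, Ideal.mem_span_singleton, X_pow_dvd_iff]

lemma psSModEq {L : Type*} [CommRing L] (n : ℕ) (x y : PowerSeries L) :
    x ≡ y [SMOD ((Ideal.span {X} : Ideal (PowerSeries L)) ^ n • ⊤ :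
      Submodule (PowerSeries L) (PowerSeries L))] ↔ ∀ i < n, coeff i x = coeff i y := by
  rw [smul_eq_mul, Ideal.mul_top, SModEq.sub_mem, psMemSpanPow]
  constructor
  · intro h i hi; have := h i hi; rw [map_sub] at this; exact sub_eq_zero.mp this
  · intro h i hi; rw [map_sub, h i hi, sub_self]

instance psAdicComplete (L : Type*) [CommRing L] :
    IsAdicComplete (Ideal.span {X} : Ideal (PowerSeries L)) (PowerSeries L) where
  haus' x hx := by
    ext i
    have := (psSModEq (i+1) x 0).mp (hx (i+1)) i (Nat.lt_succ_self i)
    simpa using this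
  prec' f hf := by
    refine ⟨PowerSeries.mk fun n => coeff n (f (n+1)), fun n => ?_⟩
    rw [psSModEq]
    intro i hi
    have := (psSModEq (i+1) (f (i+1)) (f n)).mp (hf (Nat.succ_le_of_lt hi)) i (Nat.lt_succ_self i)
    rw [coeff_mk, ← this]

section
variable {K : Type*} [Field K]
variable (d : ℕ → K → K)

lemma d_one (hd0 : ∀ a, d 0 a = a)
    (hmul : ∀ (j : ℕ) (a b : K),
      d j (a * b) = ∑ k ∈ Finset.range (j + 1), d k a * d (j - k) b) :
    ∀ j, d j 1 = if j = 0 then 1 else 0 := by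
  intro j
  induction j using Nat.strong_induction_on with
  | _ j ih =>
    match j with
    | 0 => simp [hd0]
    | (m+1) =>
      have h := hmul (m+1) 1 1
      rw [one_mul, Finset.sum_range_succ, Nat.sub_self, hd0,
        Finset.sum_eq_single_of_mem 0 (Finset.mem_range.mpr (Nat.succ_pos m))
          (fun k hk hk0 => by rw [ih k (Finset.mem_range.mp hk)]; simp [hk0]),
        hd0] at h
      simp only [Nat.sub_zero, one_mul, mul_one] at h
      simp [right_eq_add.mp h]

lemma d_zero (hadd : ∀ (j : ℕ) (a b : K), d j (a + b) = d j a + d j b) :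
    ∀ j, d j 0 = 0 := fun j => by
  have := hadd j 0 0; rw [add_zero] at this; exact (add_eq_left.mp this.symm)
end

section
variable {K L : Type*} [Field K] [Field L] [Algebra K L]

/-- the ring hom K → L[[X]] -/
noncomputable def phi (d : ℕ → K → K) (hd0 : ∀ a, d 0 a = a)
    (hadd : ∀ (j : ℕ) (a b : K), d j (a + b) = d j a + d j b)
    (hmul : ∀ (j : ℕ) (a b : K),
      d j (a * b) = ∑ k ∈ Finset.range (j + 1), d k a * d (j - k) b) :
    K →+* PowerSeries L where
  toFun a := PowerSeries.mk fun j => algebraMap K L (d j a)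
  map_one' := by
    ext j
    rw [coeff_mk, d_one d hd0 hmul j, PowerSeries.coeff_one]
    split <;> simp
  map_mul' a b := by
    ext j
    rw [coeff_mk, PowerSeries.coeff_mul, Finset.Nat.sum_antidiagonal_eq_sum_range_succ_mk,
      hmul, map_sum]
    exact Finset.sum_congr rfl fun p _ => by rw [coeff_mk, coeff_mk, map_mul]
  map_zero' := by
    ext j
    rw [coeff_mk, d_zero d hadd j, map_zero, map_zero]
  map_add' a b := by
    ext j
    rw [map_add, coeff_mk, coeff_mk, coeff_mk, hadd, map_add]

variable (d : ℕ → K → K) (hd0 : ∀ a, d 0 a = a)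
    (hadd : ∀ (j : ℕ) (a b : K), d j (a + b) = d j a + d j b)
    (hmul : ∀ (j : ℕ) (a b : K),
      d j (a * b) = ∑ k ∈ Finset.range (j + 1), d k a * d (j - k) b)

lemma coeff_phi (a : K) (j : ℕ) :
    coeff j (phi d hd0 hadd hmul a) = algebraMap K L (d j a) := by
  show coeff j (PowerSeries.mk fun j => algebraMap K L (d j a)) = _
  rw [coeff_mk]

lemma cc_phi (a : K) :
    constantCoeff (phi d hd0 hadd hmul a) = algebraMap K L a := by
  rw [← coeff_zero_eq_constantCoeff_apply, coeff_phi, hd0]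
end

lemma root_unique {L : Type*} [Field L] {F : Polynomial (PowerSeries L)} {r₁ r₂ : PowerSeries L}
    (h1 : F.eval r₁ = 0) (h2 : F.eval r₂ = 0)
    (hcc : constantCoeff r₁ = constantCoeff r₂)
    (hu : constantCoeff (F.derivative.eval r₂) ≠ 0) : r₁ = r₂ := by
  obtain ⟨k, hk⟩ := F.binomExpansion r₂ (r₁ - r₂)
  rw [add_sub_cancel, h1, h2, zero_add] at hk
  have h3 : (r₁ - r₂) * (F.derivative.eval r₂ + k * (r₁ - r₂)) = 0 := by
    linear_combination -hk
  rcases mul_eq_zero.mp h3 with h | h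
  · exact sub_eq_zero.mp h
  · exfalso
    apply hu
    have := congrArg (constantCoeff) h
    rw [map_add, map_mul, map_sub, hcc, sub_self, mul_zero, add_zero, map_zero] at this
    exact this

section
variable {K L : Type*} [Field K] [Field L] [Algebra K L]
  [FiniteDimensional K L] [Algebra.IsSeparable K L]
  (φ : K →+* PowerSeries L)
  (hccφ : ∀ a, constantCoeff (φ a) = algebraMap K L a)

include hccφ in
lemma key : ∃! Ψ : L →+* PowerSeries L,
    (∀ a, Ψ (algebraMap K L a) = φ a) ∧ (∀ x : L, constantCoeff (Ψ x) = x) := by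
  classical
  set pb := Field.powerBasisOfFiniteOfSeparable K L with hpb
  set f := minpoly K pb.gen with hf
  have hint : IsIntegral K pb.gen := Algebra.IsIntegral.isIntegral pb.gen
  have hmonic : f.Monic := minpoly.monic hint
  have hsep : f.Separable := Algebra.IsSeparable.isSeparable K pb.gen
  have hder : Polynomial.aeval pb.gen (Polynomial.derivative f) ≠ 0 :=
    hsep.aeval_derivative_ne_zero (minpoly.aeval K pb.gen)
  have hcompφ : (constantCoeff).comp φ = algebraMap K L := RingHom.ext hccφ
  set F : Polynomial (PowerSeries L) := f.map φ with hF
  -- evaluation of F under constantCoeff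
  have hccF : ∀ r : PowerSeries L,
      constantCoeff (F.eval r) =
        Polynomial.eval₂ (algebraMap K L) (constantCoeff r) f := by
    intro r
    rw [hF, Polynomial.eval_map, Polynomial.hom_eval₂, hcompφ]
  have hccF' : ∀ r : PowerSeries L,
      constantCoeff (F.derivative.eval r) =
        Polynomial.eval₂ (algebraMap K L) (constantCoeff r) (Polynomial.derivative f) := by
    intro r
    rw [hF, Polynomial.derivative_map, Polynomial.eval_map, Polynomial.hom_eval₂, hcompφ]
  -- derivative is a unit at any point with constant coefficient pb.gen
  have hunit : ∀ r : PowerSeries L, constantCoeff r = pb.gen →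
      constantCoeff (F.derivative.eval r) ≠ 0 := by
    intro r hr
    rw [hccF', hr, ← Polynomial.aeval_def]
    exact hder
  -- Hensel's lemma
  obtain ⟨r, hr, hrcc⟩ := HenselianRing.is_henselian (I := (Ideal.span {X} : Ideal (PowerSeries L)))
    F (hmonic.map φ) (C pb.gen)
    (by
      rw [Ideal.mem_span_singleton, X_dvd_iff, hccF, constantCoeff_C, ← Polynomial.aeval_def,
        minpoly.aeval])
    (by
      refine IsUnit.map _ (isUnit_iff_constantCoeff.mpr (isUnit_iff_ne_zero.mpr ?_))
      exact hunit _ (constantCoeff_C _))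
  rw [Ideal.mem_span_singleton, X_dvd_iff, map_sub, constantCoeff_C, sub_eq_zero] at hrcc
  -- build the lift
  have h₁ : Polynomial.aeval (AdjoinRoot.root f) (minpoly K pb.gen) = 0 := by
    rw [← hf, AdjoinRoot.aeval_eq, AdjoinRoot.mk_self]
  have h₂ : Polynomial.aeval pb.gen f = 0 := minpoly.aeval K pb.gen
  set e := AdjoinRoot.equiv' f pb h₁ h₂ with he
  have hroot : f.eval₂ φ r = 0 := by rw [← Polynomial.eval_map, ← hF]; exact hr
  set Ψ : L →+* PowerSeries L :=
    (AdjoinRoot.lift φ r hroot).comp e.symm.toAlgHom.toRingHom with hΨ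
  have hesymm_gen : e.symm pb.gen = AdjoinRoot.root f := by
    have : e.symm.toAlgHom = pb.lift (AdjoinRoot.root f) h₁ :=
      AdjoinRoot.equiv'_symm_toAlgHom f pb h₁ h₂
    calc e.symm pb.gen = e.symm.toAlgHom pb.gen := rfl
    _ = pb.lift (AdjoinRoot.root f) h₁ pb.gen := by rw [this]
    _ = AdjoinRoot.root f := pb.lift_gen _ _
  have hgen : Ψ pb.gen = r := by
    rw [hΨ, RingHom.comp_apply]
    show AdjoinRoot.lift φ r hroot (e.symm pb.gen) = r
    rw [hesymm_gen, AdjoinRoot.lift_root]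
  have hΨcomp : ∀ a, Ψ (algebraMap K L a) = φ a := by
    intro a
    rw [hΨ, RingHom.comp_apply]
    show AdjoinRoot.lift φ r hroot (e.symm (algebraMap K L a)) = φ a
    rw [AlgEquiv.commutes, AdjoinRoot.algebraMap_eq, AdjoinRoot.lift_of]
  have hΨcc : ∀ x : L, constantCoeff (Ψ x) = x := by
    let c : L →ₐ[K] L :=
      { toRingHom := (constantCoeff).comp Ψ,
        commutes' := fun a => by
          show constantCoeff (Ψ (algebraMap K L a)) = algebraMap K L a
          rw [hΨcomp, hccφ] }
    have hc : c = AlgHom.id K L := pb.algHom_ext (by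
      show constantCoeff (Ψ pb.gen) = pb.gen
      rw [hgen, hrcc])
    intro x
    exact congrArg (fun (g : L →ₐ[K] L) => g x) hc
  refine ⟨Ψ, ⟨hΨcomp, hΨcc⟩, ?_⟩
  -- uniqueness
  rintro Ψ' ⟨hΨ'comp, hΨ'cc⟩
  have hcomp' : Ψ'.comp (algebraMap K L : K →+* L) = φ := RingHom.ext hΨ'comp
  have hroot' : F.eval (Ψ' pb.gen) = 0 := by
    rw [hF, Polynomial.eval_map, ← hcomp', ← Polynomial.hom_eval₂, ← Polynomial.aeval_def,
      minpoly.aeval, map_zero]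
  have hgen' : Ψ' pb.gen = r := by
    refine root_unique hroot' hr ?_ (hunit r hrcc)
    rw [hΨ'cc, hrcc]
  have hcompΨ : Ψ.comp (algebraMap K L : K →+* L) = φ := RingHom.ext hΨcomp
  ext x
  obtain ⟨p, _, rfl⟩ := pb.exists_eq_aeval x
  rw [Polynomial.aeval_def, Polynomial.hom_eval₂, Polynomial.hom_eval₂, hcomp', hcompΨ,
    hgen', hgen]
end

/-- a higher F-derivation on K extends uniquely to a finite separable
extension L of K. -/
theorem stmt_8 (F K L : Type*) [Field F] [Field K] [Field L]
    [Algebra F K] [Algebra K L] [Algebra F L] [IsScalarTower F K L]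
    [FiniteDimensional K L] [Algebra.IsSeparable K L]
    (d : ℕ → K → K) (hd0 : ∀ a, d 0 a = a)
    (hadd : ∀ (j : ℕ) (a b : K), d j (a + b) = d j a + d j b)
    (hsmul : ∀ (j : ℕ) (c : F) (a : K),
      d j (algebraMap F K c * a) = algebraMap F K c * d j a)
    (hmul : ∀ (j : ℕ) (a b : K),
      d j (a * b) = ∑ k ∈ Finset.range (j + 1), d k a * d (j - k) b) :
    ∃! D : ℕ → L → L,
      (∀ x, D 0 x = x) ∧
      (∀ (j : ℕ) (x y : L), D j (x + y) = D j x + D j y) ∧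
      (∀ (j : ℕ) (c : F) (x : L),
        D j (algebraMap F L c * x) = algebraMap F L c * D j x) ∧
      (∀ (j : ℕ) (x y : L),
        D j (x * y) = ∑ k ∈ Finset.range (j + 1), D k x * D (j - k) y) ∧
      (∀ (j : ℕ) (a : K), D j (algebraMap K L a) = algebraMap K L (d j a)) := by
  classical
  set φ : K →+* PowerSeries L := phi d hd0 hadd hmul with hφ
  obtain ⟨Ψ, ⟨hc, h0⟩, huniq⟩ := key φ (cc_phi d hd0 hadd hmul)
  -- the image of F-scalars is a constant power series
  have hdF : ∀ (j : ℕ) (c : F), d j (algebraMap F K c) =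
      if j = 0 then algebraMap F K c else 0 := by
    intro j c
    have h1 := hsmul j c 1
    rw [mul_one, d_one d hd0 hmul j] at h1
    rw [h1]
    split <;> simp
  have hC : ∀ c : F, Ψ (algebraMap F L c) = PowerSeries.C (algebraMap F L c) := by
    intro c
    rw [IsScalarTower.algebraMap_apply F K L, hc]
    ext j
    rw [hφ, coeff_phi, PowerSeries.coeff_C, hdF]
    split
    · rw [← IsScalarTower.algebraMap_apply F K L]
    · rw [map_zero]
  refine ⟨fun j x => coeff j (Ψ x), ⟨?_, ?_, ?_, ?_, ?_⟩, ?_⟩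
  · intro x
    dsimp only
    rw [coeff_zero_eq_constantCoeff_apply, h0]
  · intro j x y
    dsimp only
    rw [map_add, map_add]
  · intro j c x
    dsimp only
    rw [map_mul, hC, coeff_C_mul]
  · intro j x y
    dsimp only
    rw [map_mul, PowerSeries.coeff_mul, Finset.Nat.sum_antidiagonal_eq_sum_range_succ_mk]
  · intro j a
    dsimp only
    rw [hc, hφ, coeff_phi]
  · rintro D' ⟨h1', h2', h3', h4', h5'⟩
    have hD'zero : ∀ j, D' j 0 = 0 := by
      intro j
      have := h5' j 0
      rwa [map_zero, d_zero d hadd j, map_zero] at this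
    have hD'one : ∀ j, D' j 1 = if j = 0 then (1 : L) else 0 := by
      intro j
      have := h5' j 1
      rw [map_one, d_one d hd0 hmul j] at this
      rw [this]
      split <;> simp
    set Ψ' : L →+* PowerSeries L :=
      { toFun := fun x => PowerSeries.mk fun j => D' j x
        map_one' := by
          ext j
          rw [coeff_mk, hD'one, PowerSeries.coeff_one]
        map_mul' := fun x y => by
          ext j
          rw [coeff_mk, PowerSeries.coeff_mul, Finset.Nat.sum_antidiagonal_eq_sum_range_succ_mk,
            h4']
          exact Finset.sum_congr rfl fun p _ => by rw [coeff_mk, coeff_mk]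
        map_zero' := by
          ext j
          rw [coeff_mk, hD'zero, map_zero]
        map_add' := fun x y => by
          ext j
          rw [map_add, coeff_mk, coeff_mk, coeff_mk, h2'] } with hΨ'
    have hcoeffΨ' : ∀ (j : ℕ) (x : L), coeff j (Ψ' x) = D' j x := by
      intro j x
      show coeff j (PowerSeries.mk fun j => D' j x) = D' j x
      rw [coeff_mk]
    have : Ψ' = Ψ := by
      refine huniq Ψ' ⟨fun a => ?_, fun x => ?_⟩
      · ext j
        rw [hcoeffΨ', h5', hφ, coeff_phi]
      · rw [← coeff_zero_eq_constantCoeff_apply, hcoeffΨ', h1']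
    funext j x
    rw [← hcoeffΨ', this]
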